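/- Let p : ℝ → ℝ be a continuously differentiable, strictly positive probability density, and let s = p'/p be its score function (s(x) = (log p)'(x)). Let Σ : ℝ → ℝ be continuously differentiable. Assume that the functions x ↦ p(x)Σ'(x), x ↦ p(x)Σ(x)², x ↦ p(x)Σ(x)s(x) and x ↦ p(x)s(x)² are Lebesgue integrable on ℝ, and that p(x)Σ(x) → 0 as x → +∞ and as x → −∞. Then ∫_ℝ p(x)[Σ'(x) + (1/2)Σ(x)²] dx = (1/2)∫_ℝ p(x)(Σ(x) − s(x))² dx − (1/2)∫_ℝ p(x)s(x)² dx. -/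

import Mathlib

open MeasureTheory Filter

/-- Score-matching identity (Hyvärinen, 1-dimensional): for a `C¹` strictly positive
probability density `p` with score `s = p'/p`, and a `C¹` function `Sig` with suitable
integrability and decay, the score-matching objective `∫ p(Sig' + ½Sig²)` equals
`½∫ p(Sig − s)² − ½∫ p s²`. -/
theorem score_matching_identity (p Sig : ℝ → ℝ)
    (hp : ContDiff ℝ 1 p) (hppos : ∀ x, 0 < p x)
    (hpdens : ∫ x : ℝ, p x = 1)
    (hSig : ContDiff ℝ 1 Sig)
    (s : ℝ → ℝ) (hs : s = fun x => deriv p x / p x)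
    (hint1 : Integrable (fun x => p x * deriv Sig x))
    (hint2 : Integrable (fun x => p x * (Sig x) ^ 2))
    (hint3 : Integrable (fun x => p x * (Sig x * s x)))
    (hint4 : Integrable (fun x => p x * (s x) ^ 2))
    (hdecayTop : Tendsto (fun x => p x * Sig x) atTop (nhds 0))
    (hdecayBot : Tendsto (fun x => p x * Sig x) atBot (nhds 0)) :
    ∫ x : ℝ, p x * (deriv Sig x + (1 / 2) * (Sig x) ^ 2)
      = (1 / 2) * (∫ x : ℝ, p x * (Sig x - s x) ^ 2)
        - (1 / 2) * (∫ x : ℝ, p x * (s x) ^ 2) := by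
  have hps : ∀ x, p x * (Sig x * s x) = deriv p x * Sig x := by
    intro x
    rw [hs]
    field_simp [(hppos x).ne']
  have hderiv : ∀ x, HasDerivAt (fun x => p x * Sig x)
      (deriv p x * Sig x + p x * deriv Sig x) x := by
    intro x
    exact ((hp.differentiable one_ne_zero x).hasDerivAt).mul
      ((hSig.differentiable one_ne_zero x).hasDerivAt)
  have hint3' : Integrable (fun x => deriv p x * Sig x) := by
    have := hint3
    simpa only [hps] using this
  have hzero : ∫ x : ℝ, (deriv p x * Sig x + p x * deriv Sig x) = 0 := by
    have := MeasureTheory.integral_of_hasDerivAt_of_tendsto hderiv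
      (hint3'.add hint1) hdecayBot hdecayTop
    simpa using this
  have hsum : (∫ x : ℝ, deriv p x * Sig x) + ∫ x : ℝ, p x * deriv Sig x = 0 := by
    rw [← integral_add hint3' hint1]; exact hzero
  have key : ∫ x : ℝ, p x * deriv Sig x = - ∫ x : ℝ, p x * (Sig x * s x) := by
    have : ∫ x : ℝ, p x * (Sig x * s x) = ∫ x : ℝ, deriv p x * Sig x := by
      simp only [hps]
    rw [this]; linarith
  have expand : ∀ x, p x * (Sig x - s x) ^ 2
      = p x * (Sig x) ^ 2 - 2 * (p x * (Sig x * s x)) + p x * (s x) ^ 2 := by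
    intro x; ring
  have hI : ∫ x : ℝ, p x * (Sig x - s x) ^ 2
      = (∫ x : ℝ, p x * (Sig x) ^ 2) - 2 * (∫ x : ℝ, p x * (Sig x * s x))
        + ∫ x : ℝ, p x * (s x) ^ 2 := by
    have h1 : Integrable (fun x => p x * (Sig x) ^ 2 - 2 * (p x * (Sig x * s x))) :=
      hint2.sub (hint3.const_mul 2)
    calc ∫ x : ℝ, p x * (Sig x - s x) ^ 2
        = ∫ x : ℝ, (p x * (Sig x) ^ 2 - 2 * (p x * (Sig x * s x))) + p x * (s x) ^ 2 := by
          simp only [expand]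
      _ = (∫ x : ℝ, p x * (Sig x) ^ 2 - 2 * (p x * (Sig x * s x))) + ∫ x : ℝ, p x * (s x) ^ 2 :=
          integral_add h1 hint4
      _ = _ := by rw [integral_sub hint2 (hint3.const_mul 2), integral_const_mul]
  have hL : ∫ x : ℝ, p x * (deriv Sig x + (1 / 2) * (Sig x) ^ 2)
      = (∫ x : ℝ, p x * deriv Sig x) + (1/2) * ∫ x : ℝ, p x * (Sig x) ^ 2 := by
    simp only [mul_add]
    rw [integral_add hint1 (by simpa [mul_assoc, mul_comm, mul_left_comm] using hint2.const_mul (1/2) : Integrable (fun x => p x * ((1:ℝ)/2 * (Sig x)^2)))]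
    congr 1
    rw [← integral_const_mul]
    congr 1; ext x; ring
  rw [hL, hI, key]; ring
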